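/- Let X be an exponentially distributed random variable with rate 1 (so X has density e^{−x} on (0,∞)), and let ρ ≥ 1. Then E[1/(X + 1/ρ)] = e^{1/ρ} E₁(1/ρ) < (1/ln 2) · log₂(1 + ρ), where E₁ is the exponential integral. Consequently E[log₂(1+ρX)] + log₂ E[1/(1+ρX)] < 0.48 + log₂(log₂(1+ρ)) + 1. -/

import Mathlib

set_option maxHeartbeats 1000000

open Real MeasureTheory Set

lemma aux_exp_div_integrableOn {a : ℝ} (ha : 0 < a) :
    IntegrableOn (fun t => Real.exp (-t) / t) (Ioi a) := by
  have hmeas : AEStronglyMeasurable (fun t => Real.exp (-t) / t)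
      (volume.restrict (Ioi a)) :=
    ((Real.measurable_exp.comp measurable_neg).div measurable_id).aestronglyMeasurable
  have hg : Integrable (fun t : ℝ => a⁻¹ * Real.exp (-1 * t)) (volume.restrict (Ioi a)) :=
    MeasureTheory.Integrable.const_mul (exp_neg_integrableOn_Ioi a one_pos) a⁻¹
  refine Integrable.mono' hg hmeas ?_
  filter_upwards [ae_restrict_mem measurableSet_Ioi] with t ht
  have h0 : 0 < t := lt_trans ha ht
  rw [Real.norm_eq_abs, abs_of_nonneg (by positivity), neg_one_mul, div_eq_inv_mul]
  gcongr
  exact (le_of_lt ht)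

lemma aux_shift_eq (a : ℝ) :
    (∫ t in Ioi a, Real.exp (-t) / t)
      = ∫ x in Ioi (0 : ℝ), Real.exp (-(x + a)) / (x + a) := by
  have key : ∀ x : ℝ,
      Set.indicator (Ioi a) (fun t => Real.exp (-t) / t) (x + a)
        = Set.indicator (Ioi (0:ℝ)) (fun x => Real.exp (-(x + a)) / (x + a)) x := by
    intro x
    by_cases hx : 0 < x
    · rw [Set.indicator_of_mem (by simpa using hx), Set.indicator_of_mem (by simpa using hx)]
    · rw [Set.indicator_of_notMem (by simpa using hx), Set.indicator_of_notMem (by simpa using hx)]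
  calc (∫ t in Ioi a, Real.exp (-t) / t)
      = ∫ t, Set.indicator (Ioi a) (fun t => Real.exp (-t) / t) t :=
        (integral_indicator measurableSet_Ioi).symm
    _ = ∫ x, Set.indicator (Ioi a) (fun t => Real.exp (-t) / t) (x + a) :=
        (integral_add_right_eq_self _ a).symm
    _ = ∫ x, Set.indicator (Ioi (0:ℝ)) (fun x => Real.exp (-(x + a)) / (x + a)) x := by
        simp_rw [key]
    _ = ∫ x in Ioi (0:ℝ), Real.exp (-(x + a)) / (x + a) :=
        integral_indicator measurableSet_Ioi

lemma aux_part1 {a : ℝ} (ha : 0 < a) :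
    (∫ x in Ioi (0 : ℝ), (1 / (x + a)) * Real.exp (-x))
      = Real.exp a * ∫ t in Ioi a, Real.exp (-t) / t := by
  rw [aux_shift_eq, ← integral_const_mul]
  refine setIntegral_congr_fun measurableSet_Ioi fun x hx => ?_
  have hxa : 0 < x + a := by have := mem_Ioi.mp hx; linarith
  rw [show Real.exp a * (Real.exp (-(x + a)) / (x + a))
        = Real.exp a * Real.exp (-(x + a)) * (1 / (x + a)) by ring,
    ← Real.exp_add, show a + -(x + a) = -x by ring, mul_comm]

lemma aux_E1_pos {a : ℝ} (ha : 0 < a) :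
    0 < ∫ t in Ioi a, Real.exp (-t) / t := by
  rw [setIntegral_pos_iff_support_of_nonneg_ae ?_ (aux_exp_div_integrableOn ha)]
  · have hsub : Ioi a ⊆ Function.support (fun t => Real.exp (-t) / t) ∩ Ioi a := by
      intro t ht
      refine ⟨?_, ht⟩
      have h0 : 0 < t := lt_trans ha ht
      simp only [Function.mem_support]
      positivity
    have hv : (0 : ENNReal) < volume (Ioi a) := by
      rw [Real.volume_Ioi]
      norm_num
    exact lt_of_lt_of_le hv (measure_mono hsub)
  · filter_upwards [ae_restrict_mem measurableSet_Ioi] with t ht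
    have h0 : 0 < t := lt_trans ha ht
    positivity

lemma aux_integrable_x_exp : IntegrableOn (fun x => x * Real.exp (-x)) (Ioi (0:ℝ)) := by
  have h := Real.GammaIntegral_convergent (by norm_num : (0:ℝ) < 2)
  refine h.congr_fun (fun x hx => ?_) measurableSet_Ioi
  beta_reduce
  rw [show ((2:ℝ) - 1) = 1 by norm_num, Real.rpow_one, mul_comm]

lemma aux_integral_x_exp : (∫ x in Ioi (0:ℝ), x * Real.exp (-x)) = 1 := by
  have h := Real.Gamma_eq_integral (by norm_num : (0:ℝ) < 2)
  have h2 : Real.Gamma 2 = 1 := Real.Gamma_two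
  calc (∫ x in Ioi (0:ℝ), x * Real.exp (-x))
      = ∫ x in Ioi (0:ℝ), Real.exp (-x) * x ^ ((2:ℝ) - 1) := by
        congr 1
        funext x
        rw [show ((2:ℝ) - 1) = 1 by norm_num, Real.rpow_one, mul_comm]
    _ = Real.Gamma 2 := h.symm
    _ = 1 := h2

lemma aux_integrable_exp (c : ℝ) : IntegrableOn (fun x => Real.exp (-x)) (Ioi c) := by
  have h := exp_neg_integrableOn_Ioi c one_pos
  refine h.congr_fun (fun x _ => ?_) measurableSet_Ioi
  beta_reduce
  rw [neg_one_mul]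

lemma aux_E1_le {a : ℝ} (ha : 0 < a) (ha1 : a ≤ 1) :
    (∫ t in Ioi a, Real.exp (-t) / t)
      ≤ Real.exp (-a) * (Real.log (a + 1) - Real.log a) + Real.exp (-(a + 1)) := by
  have hsplit : (∫ t in Ioi a, Real.exp (-t) / t)
      = (∫ t in Ioc a (a + 1), Real.exp (-t) / t)
        + ∫ t in Ioi (a + 1), Real.exp (-t) / t := by
    rw [← setIntegral_union (Ioc_disjoint_Ioi le_rfl) measurableSet_Ioi
      ((aux_exp_div_integrableOn ha).mono_set Ioc_subset_Ioi_self)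
      ((aux_exp_div_integrableOn ha).mono_set (Ioi_subset_Ioi (by linarith))),
      Ioc_union_Ioi_eq_Ioi (by linarith : a ≤ a + 1)]
  have h1 : (∫ t in Ioc a (a + 1), Real.exp (-t) / t)
      ≤ Real.exp (-a) * (Real.log (a + 1) - Real.log a) := by
    have hint : IntervalIntegrable (fun t : ℝ => Real.exp (-a) * (1 / t)) volume a (a + 1) := by
      apply ContinuousOn.intervalIntegrable
      apply ContinuousOn.mul continuousOn_const
      apply ContinuousOn.div continuousOn_const continuousOn_id
      intro x hx
      rw [uIcc_of_le (by linarith : a ≤ a + 1)] at hx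
      have hax : a ≤ x := hx.1
      simp only [id_eq]
      intro h
      rw [h] at hax
      linarith
    have hb : (∫ t in Ioc a (a + 1), Real.exp (-a) * (1 / t))
        = Real.exp (-a) * (Real.log (a + 1) - Real.log a) := by
      rw [integral_const_mul]
      congr 1
      rw [← intervalIntegral.integral_of_le (by linarith : a ≤ a + 1),
        integral_one_div (by
          rw [uIcc_of_le (by linarith : a ≤ a + 1)]
          intro h
          exact absurd h.1 (by linarith)),
        Real.log_div (by linarith) (ne_of_gt ha)]
    rw [← hb]
    apply setIntegral_mono_on
      ((aux_exp_div_integrableOn ha).mono_set Ioc_subset_Ioi_self)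
      ((intervalIntegrable_iff_integrableOn_Ioc_of_le (by linarith)).mp hint)
      measurableSet_Ioc
    intro t ht
    have h0 : 0 < t := lt_trans ha ht.1
    rw [mul_one_div]
    gcongr
    exact ht.1.le
  have h2 : (∫ t in Ioi (a + 1), Real.exp (-t) / t) ≤ Real.exp (-(a + 1)) := by
    rw [← integral_exp_neg_Ioi (a + 1)]
    apply setIntegral_mono_on
      ((aux_exp_div_integrableOn ha).mono_set (Ioi_subset_Ioi (by linarith)))
      (aux_integrable_exp (a + 1))
      measurableSet_Ioi
    intro t ht
    have h1t : 1 ≤ t := by have := mem_Ioi.mp ht; linarith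
    exact div_le_self (Real.exp_pos _).le h1t
  linarith [hsplit, h1, h2]

lemma aux_log_integrable {ρ : ℝ} (hρ : 1 ≤ ρ) :
    IntegrableOn (fun x => Real.log (1 + ρ * x) * Real.exp (-x)) (Ioi (0:ℝ)) := by
  have hρ0 : 0 < ρ := lt_of_lt_of_le one_pos hρ
  have hmeas : AEStronglyMeasurable (fun x => Real.log (1 + ρ * x) * Real.exp (-x))
      (volume.restrict (Ioi (0:ℝ))) :=
    ((Real.measurable_log.comp (measurable_const.add (measurable_const.mul measurable_id))).mul
      (Real.measurable_exp.comp measurable_neg)).aestronglyMeasurable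
  have hg : Integrable (fun x : ℝ => ρ * (x * Real.exp (-x))) (volume.restrict (Ioi (0:ℝ))) :=
    MeasureTheory.Integrable.const_mul aux_integrable_x_exp ρ
  refine Integrable.mono' hg hmeas ?_
  filter_upwards [ae_restrict_mem measurableSet_Ioi] with x hx
  have hx0 : 0 < x := mem_Ioi.mp hx
  have h1 : 0 < 1 + ρ * x := by nlinarith
  have hlog0 : 0 ≤ Real.log (1 + ρ * x) := Real.log_nonneg (by nlinarith)
  have hlog : Real.log (1 + ρ * x) ≤ ρ * x := by
    have := Real.log_le_sub_one_of_pos h1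
    linarith
  rw [Real.norm_eq_abs, abs_of_nonneg (by positivity)]
  calc Real.log (1 + ρ * x) * Real.exp (-x) ≤ (ρ * x) * Real.exp (-x) := by gcongr
    _ = ρ * (x * Real.exp (-x)) := by ring

lemma aux_log_integral_le {ρ : ℝ} (hρ : 1 ≤ ρ) :
    (∫ x in Ioi (0:ℝ), Real.log (1 + ρ * x) * Real.exp (-x)) ≤ Real.log (1 + ρ) := by
  have hρ0 : 0 < ρ := lt_of_lt_of_le one_pos hρ
  have h1ρ : 0 < 1 + ρ := by linarith
  set c := ρ / (1 + ρ) with hc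
  have hce : Integrable (fun x : ℝ => (Real.log (1 + ρ) - c) * Real.exp (-x))
      (volume.restrict (Ioi (0:ℝ))) :=
    MeasureTheory.Integrable.const_mul (aux_integrable_exp 0) _
  have hcx : Integrable (fun x : ℝ => c * (x * Real.exp (-x)))
      (volume.restrict (Ioi (0:ℝ))) :=
    MeasureTheory.Integrable.const_mul aux_integrable_x_exp c
  have hle : (∫ x in Ioi (0:ℝ), Real.log (1 + ρ * x) * Real.exp (-x))
      ≤ ∫ x in Ioi (0:ℝ),
          ((Real.log (1 + ρ) - c) * Real.exp (-x) + c * (x * Real.exp (-x))) := by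
    apply setIntegral_mono_on (aux_log_integrable hρ) (hce.add hcx) measurableSet_Ioi
    intro x hx
    have hx0 : 0 < x := mem_Ioi.mp hx
    have h1 : 0 < 1 + ρ * x := by nlinarith
    have key : Real.log (1 + ρ * x) ≤ Real.log (1 + ρ) + c * (x - 1) := by
      have hd : 0 < (1 + ρ * x) / (1 + ρ) := by positivity
      have h2 := Real.log_le_sub_one_of_pos hd
      rw [Real.log_div (ne_of_gt h1) (ne_of_gt h1ρ)] at h2
      have h3 : (1 + ρ * x) / (1 + ρ) - 1 = c * (x - 1) := by
        rw [hc]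
        field_simp
        ring
      rw [h3] at h2
      linarith
    have hexp : (0:ℝ) ≤ Real.exp (-x) := (Real.exp_pos _).le
    calc Real.log (1 + ρ * x) * Real.exp (-x)
        ≤ (Real.log (1 + ρ) + c * (x - 1)) * Real.exp (-x) :=
          mul_le_mul_of_nonneg_right key hexp
      _ = (Real.log (1 + ρ) - c) * Real.exp (-x) + c * (x * Real.exp (-x)) := by ring
  rw [integral_add hce hcx, integral_const_mul, integral_const_mul, aux_integral_x_exp,
    integral_exp_neg_Ioi_zero] at hle
  linarith
theorem rayleigh_exp_integral_bound (ρ : ℝ) (hρ : 1 ≤ ρ) :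
    (∫ x in Set.Ioi (0 : ℝ), (1 / (x + 1 / ρ)) * Real.exp (-x))
      = Real.exp (1 / ρ) * (∫ t in Set.Ioi (1 / ρ), Real.exp (-t) / t) ∧
    Real.exp (1 / ρ) * (∫ t in Set.Ioi (1 / ρ), Real.exp (-t) / t)
      < (1 / Real.log 2) * Real.logb 2 (1 + ρ) ∧
    (∫ x in Set.Ioi (0 : ℝ), Real.logb 2 (1 + ρ * x) * Real.exp (-x))
        + Real.logb 2 (∫ x in Set.Ioi (0 : ℝ), (1 / (1 + ρ * x)) * Real.exp (-x))
      < 0.48 + Real.logb 2 (Real.logb 2 (1 + ρ)) + 1 := by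
  have hρ0 : 0 < ρ := lt_of_lt_of_le one_pos hρ
  have ha : 0 < 1 / ρ := by positivity
  have ha1 : 1 / ρ ≤ 1 := by rw [div_le_one hρ0]; exact hρ
  have hIpos : 0 < ∫ t in Set.Ioi (1 / ρ), Real.exp (-t) / t := aux_E1_pos ha
  have hpart1 : (∫ x in Set.Ioi (0 : ℝ), (1 / (x + 1 / ρ)) * Real.exp (-x))
      = Real.exp (1 / ρ) * ∫ t in Set.Ioi (1 / ρ), Real.exp (-t) / t := aux_part1 ha
  have hlog2pos : (0:ℝ) < Real.log 2 := Real.log_pos (by norm_num)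
  have hL : Real.log 2 ≤ Real.log (1 + ρ) := Real.log_le_log (by norm_num) (by linarith)
  have hLpos : 0 < Real.log (1 + ρ) := lt_of_lt_of_le hlog2pos hL
  have hl2lb : 0.6931471803 < Real.log 2 := Real.log_two_gt_d9
  have hl2ub : Real.log 2 < 0.6931471808 := Real.log_two_lt_d9
  have he : Real.exp (-1) < 0.368 := by
    rw [Real.exp_neg, inv_eq_one_div, div_lt_iff₀ (Real.exp_pos 1)]
    nlinarith [Real.exp_one_gt_d9]
  have hepos : 0 < Real.exp (-1) := Real.exp_pos _
  have hE_le : Real.exp (1 / ρ) * (∫ t in Set.Ioi (1 / ρ), Real.exp (-t) / t)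
      ≤ Real.log (1 + ρ) + Real.exp (-1) := by
    have h1 := aux_E1_le ha ha1
    have heq : Real.exp (1 / ρ)
          * (Real.exp (-(1 / ρ)) * (Real.log (1 / ρ + 1) - Real.log (1 / ρ))
            + Real.exp (-(1 / ρ + 1)))
        = (Real.log (1 / ρ + 1) - Real.log (1 / ρ)) + Real.exp (-1) := by
      rw [mul_add, ← mul_assoc, ← Real.exp_add, add_neg_cancel, Real.exp_zero, one_mul,
        ← Real.exp_add]
      congr 2
      ring
    have hlogs : Real.log (1 / ρ + 1) - Real.log (1 / ρ) = Real.log (1 + ρ) := by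
      rw [← Real.log_div (by positivity) (ne_of_gt ha)]
      congr 1
      field_simp
  -- (1/ρ + 1)/(1/ρ) = 1 + ρ
    calc Real.exp (1 / ρ) * (∫ t in Set.Ioi (1 / ρ), Real.exp (-t) / t)
        ≤ Real.exp (1 / ρ)
            * (Real.exp (-(1 / ρ)) * (Real.log (1 / ρ + 1) - Real.log (1 / ρ))
              + Real.exp (-(1 / ρ + 1))) :=
          mul_le_mul_of_nonneg_left h1 (Real.exp_pos _).le
      _ = Real.log (1 + ρ) + Real.exp (-1) := by rw [heq, hlogs]
  refine ⟨hpart1, ?_, ?_⟩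
  · have hfin : Real.log (1 + ρ) + Real.exp (-1) < (1 / Real.log 2) * Real.logb 2 (1 + ρ) := by
      simp only [Real.logb]
      rw [show (1 / Real.log 2) * (Real.log (1 + ρ) / Real.log 2)
          = Real.log (1 + ρ) / (Real.log 2 * Real.log 2) by ring]
      rw [lt_div_iff₀ (by positivity)]
      have hll : Real.log 2 * Real.log 2 < 0.4805 := by nlinarith
      have hpe : 0 < Real.log (1 + ρ) + Real.exp (-1) := by positivity
      have h8 := mul_lt_mul_of_pos_left hll hpe
      linarith
    exact lt_of_le_of_lt hE_le hfin
  · have hKeq : (∫ x in Set.Ioi (0 : ℝ), (1 / (1 + ρ * x)) * Real.exp (-x))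
        = (1 / ρ) * (Real.exp (1 / ρ) * ∫ t in Set.Ioi (1 / ρ), Real.exp (-t) / t) := by
      rw [← hpart1, ← integral_const_mul]
      refine setIntegral_congr_fun measurableSet_Ioi fun x hx => ?_
      have hx0 : 0 < x := mem_Ioi.mp hx
      have h1 : 0 < 1 + ρ * x := by nlinarith
      have hxa : 0 < x + 1 / ρ := by linarith
      field_simp
      ring
    have hKpos : 0 < (1 / ρ)
        * (Real.exp (1 / ρ) * ∫ t in Set.Ioi (1 / ρ), Real.exp (-t) / t) :=
      mul_pos (by positivity) (mul_pos (Real.exp_pos _) hIpos)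
    have hKle : (1 / ρ) * (Real.exp (1 / ρ) * ∫ t in Set.Ioi (1 / ρ), Real.exp (-t) / t)
        ≤ (Real.log (1 + ρ) + Real.exp (-1)) / ρ := by
      rw [one_div, inv_mul_eq_div]
      gcongr
      simpa [one_div] using hE_le
    have hlogK : Real.log ((1 / ρ)
          * (Real.exp (1 / ρ) * ∫ t in Set.Ioi (1 / ρ), Real.exp (-t) / t))
        ≤ Real.log (Real.log (1 + ρ) + Real.exp (-1)) - Real.log ρ := by
      calc Real.log ((1 / ρ) * (Real.exp (1 / ρ) * ∫ t in Set.Ioi (1 / ρ), Real.exp (-t) / t))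
          ≤ Real.log ((Real.log (1 + ρ) + Real.exp (-1)) / ρ) := Real.log_le_log hKpos hKle
        _ = Real.log (Real.log (1 + ρ) + Real.exp (-1)) - Real.log ρ :=
            Real.log_div (by positivity) (ne_of_gt hρ0)
    have hLR : Real.log (1 + ρ) - Real.log ρ ≤ Real.log 2 := by
      rw [show Real.log (1 + ρ) - Real.log ρ = Real.log ((1 + ρ) / ρ) from
        (Real.log_div (by positivity) (ne_of_gt hρ0)).symm]
      apply Real.log_le_log (by positivity)
      rw [div_le_iff₀ hρ0]
      linarith
    have h5 : Real.log (Real.log (1 + ρ) + Real.exp (-1))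
        ≤ Real.log (Real.log (1 + ρ) / Real.log 2) + (Real.log 2 + Real.exp (-1) - 1) := by
      have hfact : Real.log (1 + ρ) + Real.exp (-1)
          = (Real.log (1 + ρ) / Real.log 2)
            * (Real.log 2 + Real.exp (-1) * Real.log 2 / Real.log (1 + ρ)) := by
        field_simp
      have hpos2 : 0 < Real.log 2 + Real.exp (-1) * Real.log 2 / Real.log (1 + ρ) := by
        positivity
      rw [hfact, Real.log_mul (by positivity) (ne_of_gt hpos2)]
      have h6 := Real.log_le_sub_one_of_pos hpos2
      have h7 : Real.exp (-1) * Real.log 2 / Real.log (1 + ρ) ≤ Real.exp (-1) := by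
        rw [mul_div_assoc]
        nth_rewrite 2 [← mul_one (Real.exp (-1))]
        gcongr
        rw [div_le_one hLpos]
        exact hL
      linarith
    have hJ : (∫ x in Set.Ioi (0 : ℝ), Real.logb 2 (1 + ρ * x) * Real.exp (-x))
        = (∫ x in Set.Ioi (0 : ℝ), Real.log (1 + ρ * x) * Real.exp (-x)) / Real.log 2 := by
      rw [← integral_div]
      congr 1
      funext x
      rw [Real.logb, div_mul_eq_mul_div]
    have hJle : (∫ x in Set.Ioi (0 : ℝ), Real.log (1 + ρ * x) * Real.exp (-x))
        ≤ Real.log (1 + ρ) := aux_log_integral_le hρ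
    rw [hJ, hKeq]
    simp only [Real.logb]
    have hnum : (∫ x in Set.Ioi (0 : ℝ), Real.log (1 + ρ * x) * Real.exp (-x))
          + Real.log ((1 / ρ) * (Real.exp (1 / ρ) * ∫ t in Set.Ioi (1 / ρ), Real.exp (-t) / t))
        < 1.48 * Real.log 2 + Real.log (Real.log (1 + ρ) / Real.log 2) := by
      linarith
    calc (∫ x in Set.Ioi (0 : ℝ), Real.log (1 + ρ * x) * Real.exp (-x)) / Real.log 2
          + Real.log ((1 / ρ)
              * (Real.exp (1 / ρ) * ∫ t in Set.Ioi (1 / ρ), Real.exp (-t) / t)) / Real.log 2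
        = ((∫ x in Set.Ioi (0 : ℝ), Real.log (1 + ρ * x) * Real.exp (-x))
            + Real.log ((1 / ρ)
              * (Real.exp (1 / ρ) * ∫ t in Set.Ioi (1 / ρ), Real.exp (-t) / t))) / Real.log 2 := by
          ring
      _ < (1.48 * Real.log 2 + Real.log (Real.log (1 + ρ) / Real.log 2)) / Real.log 2 := by
          gcongr
      _ = 0.48 + Real.log (Real.log (1 + ρ) / Real.log 2) / Real.log 2 + 1 := by
          field_simp
          ring
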